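/- Let A be the N×N diagonal matrix with A[n,n] = n + 1/2 for n = 0,…,N−1 and let b ∈ ℝ^N be the all-ones vector. Then the Hilbert matrix H, defined by H[m,n] = 1/(m+n+1) for m,n ∈ {0,…,N−1}, is the unique solution X of the Lyapunov equation AX + XA* = bb*, and H is positive definite. -/

import Mathlib

open Matrix MeasureTheory

lemma int_pow (k : ℕ) : ∫ t in Set.Ioc (0:ℝ) 1, t ^ k = 1 / ((k:ℝ)+1) := by
  rw [← intervalIntegral.integral_of_le (by norm_num : (0:ℝ) ≤ 1), integral_pow]
  norm_num

lemma key {N : ℕ} (x : Fin N → ℝ) :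
    ∫ t in Set.Ioc (0:ℝ) 1, (∑ i : Fin N, x i * t ^ (i:ℕ))^2
      = ∑ m : Fin N, ∑ n : Fin N, x m * x n / ((m:ℝ)+(n:ℝ)+1) := by
  have h : ∀ t : ℝ, (∑ i : Fin N, x i * t ^ (i:ℕ))^2
      = ∑ m : Fin N, ∑ n : Fin N, x m * x n * t ^ ((m:ℕ)+(n:ℕ)) := by
    intro t
    rw [sq, Finset.sum_mul_sum]
    congr 1; ext m; congr 1; ext n; ring
  simp_rw [h]
  rw [integral_finset_sum]
  · refine Finset.sum_congr rfl fun m _ => ?_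
    rw [integral_finset_sum]
    · refine Finset.sum_congr rfl fun n _ => ?_
      rw [integral_const_mul, int_pow]
      push_cast; ring
    · intro n _
      exact ((continuous_const.mul (continuous_pow _)).integrableOn_Ioc)
  · intro m _
    exact (Continuous.integrableOn_Ioc (by continuity))

lemma pos_quad {N : ℕ} (x : Fin N → ℝ) (hx : x ≠ 0) :
    0 < ∑ m : Fin N, ∑ n : Fin N, x m * x n / ((m:ℝ)+(n:ℝ)+1) := by
  rw [← key]
  set p : Polynomial ℝ := ∑ i : Fin N, Polynomial.C (x i) * Polynomial.X ^ (i:ℕ) with hp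
  have hev : ∀ t : ℝ, p.eval t = ∑ i : Fin N, x i * t ^ (i:ℕ) := by
    intro t; simp [hp, Polynomial.eval_finset_sum]
  have hpne : p ≠ 0 := by
    obtain ⟨i, hi⟩ : ∃ i, x i ≠ 0 := by
      by_contra h; push_neg at h; exact hx (funext h)
    intro h
    have : p.coeff (i:ℕ) = x i := by
      simp only [hp, Polynomial.finset_sum_coeff, Polynomial.coeff_C_mul,
        Polynomial.coeff_X_pow]
      simp [Fin.val_inj, Finset.sum_ite_eq]
    rw [h] at this; simp at this; exact hi this.symm
  have hroots := Polynomial.finite_setOf_isRoot hpne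
  rw [MeasureTheory.setIntegral_pos_iff_support_of_nonneg_ae]
  · have hsub : Set.Ioc (0:ℝ) 1 \ {t | p.IsRoot t} ⊆
        Function.support (fun t => (∑ i : Fin N, x i * t ^ (i:ℕ))^2) ∩ Set.Ioc 0 1 := by
      rintro t ⟨ht, hroot⟩
      refine ⟨?_, ht⟩
      simp only [Function.mem_support]
      intro h0
      exact hroot (by simpa [Polynomial.IsRoot, hev, sq_eq_zero_iff] using h0)
    calc (0:ENNReal) < 1 := by norm_num
      _ = volume (Set.Ioc (0:ℝ) 1 \ {t | p.IsRoot t}) := by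
          rw [measure_diff_null (hroots.measure_zero volume)]; simp
      _ ≤ _ := measure_mono hsub
  · filter_upwards with t using sq_nonneg _
  · exact Continuous.integrableOn_Ioc (by fun_prop)

theorem stmt17 {N : ℕ} (A H : Matrix (Fin N) (Fin N) ℝ)
    (hA : A = Matrix.diagonal fun n : Fin N => (n : ℝ) + 1 / 2)
    (hH : H = Matrix.of fun m n : Fin N => 1 / ((m : ℝ) + (n : ℝ) + 1)) :
    A * H + H * Aᵀ = Matrix.vecMulVec (fun _ => 1) (fun _ => 1) ∧
    (∀ X : Matrix (Fin N) (Fin N) ℝ,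
      A * X + X * Aᵀ = Matrix.vecMulVec (fun _ => 1) (fun _ => 1) → X = H) ∧
    H.PosDef := by
  have hd : ∀ m n : Fin N, (m:ℝ) + (n:ℝ) + 1 ≠ 0 := fun m n => by positivity
  subst hA hH
  refine ⟨?_, ?_, ?_⟩
  · ext m n
    simp only [Matrix.diagonal_transpose, Matrix.add_apply, Matrix.mul_apply,
      Matrix.diagonal_apply, Matrix.of_apply, Matrix.vecMulVec_apply,
      ite_mul, mul_ite, zero_mul, mul_zero, Finset.sum_ite_eq, Finset.sum_ite_eq',
      Finset.mem_univ, if_true]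
    field_simp
    ring
  · intro X hX
    ext m n
    have h := congr_fun (congr_fun hX m) n
    simp only [Matrix.diagonal_transpose, Matrix.add_apply, Matrix.mul_apply,
      Matrix.diagonal_apply, Matrix.vecMulVec_apply,
      ite_mul, mul_ite, zero_mul, mul_zero, Finset.sum_ite_eq, Finset.sum_ite_eq',
      Finset.mem_univ, if_true] at h
    simp only [Matrix.of_apply]
    field_simp
    linarith
  · rw [Matrix.posDef_iff_dotProduct_mulVec]
    constructor
    · ext m n
      simp [Matrix.conjTranspose_apply]
      ring_nf
    · intro x hx
      have := pos_quad x hx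
      simp only [star_trivial, dotProduct, Matrix.mulVec, Matrix.of_apply,
        RCLike.inner_apply, starRingEnd_apply, star_trivial]
      convert this using 2 with m
      on_goal 1 => rfl
      rw [Finset.mul_sum]
      refine Finset.sum_congr rfl fun n _ => ?_
      simp [dotProduct]
      ring
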